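/- Forward direction of the kSUM reduction for two machines: let x_1,…,x_h be positive integers, let T = Σ_{i=1}^h x_i, and let k, B be positive integers with 1 ≤ k < h and B < T. Consider the two-machine JIT flow-shop instance with kh+1 jobs: for each i ∈ {1,…,k} and j ∈ {1,…,h} a job J_{ij} with p^(1)_{ij} = x_j, p^(2)_{ij} = 1, w_{ij} = T + x_j, d_{ij} = iT; and a job J_{kh+1} with p^(1)_{kh+1} = (k+1)T − B, p^(2)_{kh+1} = 1, w_{kh+1} = k²(T+1)², d_{kh+1} = (k+1)T + 1. If there exist indices j_1,…,j_k ∈ {1,…,h} (not necessarily distinct) with x_{j_1} + … + x_{j_k} = B, then this instance admits a feasible set E with Σ_{j∈E} w_j ≥ kT + B + k²(T+1)². -/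

import Mathlib

open Finset

/-- A just-in-time flow-shop instance on `m` machines with jobs of type `J`:
`p i j` is the (positive integer) processing time of job `j` on machine `i`,
`d j` its positive integer due date and `w j` its positive integer weight. -/
structure JITInstance (m : ℕ) (J : Type) where
  p : Fin m → J → ℕ
  d : J → ℕ
  w : J → ℕ
  p_pos : ∀ i j, 0 < p i j
  d_pos : ∀ j, 0 < d j
  w_pos : ∀ j, 0 < w j

/-- `S` is a JIT schedule of the job set `E`: on every machine the processing
intervals `(S i j, S i j + p i j]` of distinct jobs of `E` are pairwise disjoint,
each job's operation on machine `i+1` starts no earlier than its completion on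
machine `i`, and every job of `E` completes on the last machine exactly at its
due date.  (Start times are nonnegative automatically, being naturals.) -/
def IsJITSchedule {m : ℕ} {J : Type} (I : JITInstance m J)
    (E : Finset J) (S : Fin m → J → ℕ) : Prop :=
  (∀ i : Fin m, ∀ j ∈ E, ∀ j' ∈ E, j ≠ j' →
      S i j + I.p i j ≤ S i j' ∨ S i j' + I.p i j' ≤ S i j) ∧
  (∀ j ∈ E, ∀ i i' : Fin m, i'.val = i.val + 1 →
      S i j + I.p i j ≤ S i' j) ∧
  (∀ j ∈ E, ∀ i : Fin m, i.val = m - 1 →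
      S i j + I.p i j = I.d j)

/-- A job set is feasible if it admits a JIT schedule. -/
def Feasible {m : ℕ} {J : Type} (I : JITInstance m J) (E : Finset J) : Prop :=
  ∃ S : Fin m → J → ℕ, IsJITSchedule I E S

/-- The two-machine JIT flow-shop instance constructed in the kSUM reduction:
for each `i ∈ {1,…,k}`, `j ∈ {1,…,h}` a job `J_{ij}` (encoded `Sum.inl (i, j)`,
0-indexed) with `p¹ = x j`, `p² = 1`, `w = T + x j`, `d = iT`, and one extra
job `J_{kh+1}` (encoded `Sum.inr ()`) with `p¹ = (k+1)T - B`, `p² = 1`,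
`w = k²(T+1)²`, `d = (k+1)T + 1`, where `T = ∑ i, x i`. -/
def ksumInstance2 (h k B : ℕ) (x : Fin h → ℕ) (hx : ∀ i, 0 < x i)
    (hk : 1 ≤ k) (hB : 0 < B) (hBT : B < ∑ i, x i) :
    JITInstance 2 (Fin k × Fin h ⊕ Unit) where
  p := fun i jb =>
    if i.val = 0 then
      Sum.elim (fun q => x q.2) (fun _ => (k + 1) * (∑ i, x i) - B) jb
    else 1
  d := Sum.elim (fun q => (q.1.val + 1) * (∑ i, x i))
    (fun _ => (k + 1) * (∑ i, x i) + 1)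
  w := Sum.elim (fun q => (∑ i, x i) + x q.2)
    (fun _ => k ^ 2 * ((∑ i, x i) + 1) ^ 2)
  p_pos := by
    intro i jb
    try dsimp only
    split
    · rcases jb with ⟨a, j⟩ | u
      · simpa using hx j
      · simp only [Sum.elim_inr]
        have h1 : (∑ i, x i) ≤ (k + 1) * (∑ i, x i) :=
          Nat.le_mul_of_pos_left _ (by omega)
        omega
    · exact one_pos
  d_pos := by
    rintro (⟨a, j⟩ | u)
    · simp only [Sum.elim_inl]
      exact Nat.mul_pos (by omega) (by omega)
    · simp only [Sum.elim_inr]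
      omega
  w_pos := by
    rintro (⟨a, j⟩ | u)
    · simp only [Sum.elim_inl]
      have := hx j
      omega
    · simp only [Sum.elim_inr]
      exact Nat.mul_pos (pow_pos (by omega : 0 < k) 2)
        (pow_pos (by omega : 0 < (∑ i, x i) + 1) 2)

/-- forward direction of the kSUM reduction for two machines.
If some `k` of the numbers `x 0, …, x (h-1)` (with repetitions allowed) sum to
`B`, then the constructed instance has a feasible set of total weight at least
`kT + B + k²(T+1)²`. -/
theorem ksum_two_machines_forward (h k B : ℕ) (x : Fin h → ℕ)
    (hx : ∀ i, 0 < x i) (hk : 1 ≤ k) (hkh : k < h) (hB : 0 < B)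
    (hBT : B < ∑ i, x i)
    (f : Fin k → Fin h) (hf : ∑ i, x (f i) = B) :
    ∃ E : Finset (Fin k × Fin h ⊕ Unit),
      Feasible (ksumInstance2 h k B x hx hk hB hBT) E ∧
      k * (∑ i, x i) + B + k ^ 2 * ((∑ i, x i) + 1) ^ 2
        ≤ ∑ jb ∈ E, (ksumInstance2 h k B x hx hk hB hBT).w jb := by
  classical
  set T := ∑ i, x i with hT
  have hT2 : B + 1 ≤ T := hBT
  have hT1 : 1 ≤ T := by omega
  -- prefix sums
  set P : Fin k → ℕ := fun a => ∑ l ∈ Finset.univ.filter (fun l : Fin k => l.val < a.val), x (f l) with hP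
  have hPeq : ∀ a : Fin k, P a + x (f a)
      = ∑ l ∈ Finset.univ.filter (fun l : Fin k => l.val ≤ a.val), x (f l) := by
    intro a
    have hins : Finset.univ.filter (fun l : Fin k => l.val ≤ a.val)
        = insert a (Finset.univ.filter (fun l : Fin k => l.val < a.val)) := by
      ext l
      simp only [Finset.mem_filter, Finset.mem_insert, Finset.mem_univ, true_and]
      constructor
      · intro hl
        rcases Nat.lt_or_ge l.val a.val with h1 | h1
        · exact Or.inr h1
        · exact Or.inl (Fin.ext (by omega))
      · rintro (rfl | hl)
        · exact le_refl _
        · omega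
    rw [hins, Finset.sum_insert (by simp)]
    ring
  have hPB : ∀ a : Fin k, P a + x (f a) ≤ B := by
    intro a
    rw [hPeq a, ← hf]
    exact Finset.sum_le_sum_of_subset (Finset.filter_subset _ _)
  have hPmono : ∀ a b : Fin k, a.val < b.val → P a + x (f a) ≤ P b := by
    intro a b hab
    rw [hPeq a]
    apply Finset.sum_le_sum_of_subset
    intro l hl
    simp only [Finset.mem_filter, Finset.mem_univ, true_and] at hl ⊢
    omega
  -- the feasible set
  refine ⟨(Finset.univ.image (fun i : Fin k => (Sum.inl (i, f i) : Fin k × Fin h ⊕ Unit)))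
      ∪ {Sum.inr ()}, ?_, ?_⟩
  · -- feasibility
    refine ⟨fun i jb => if i.val = 0 then
        Sum.elim (fun q => P q.1) (fun _ => B) jb
      else Sum.elim (fun q => (q.1.val + 1) * T - 1) (fun _ => (k + 1) * T) jb, ?_, ?_, ?_⟩
    · -- disjointness
      intro i jb hjb jb' hjb' hne
      simp only [Finset.mem_union, Finset.mem_image, Finset.mem_univ, true_and,
        Finset.mem_singleton] at hjb hjb'
      have hik : (k + 1) * T ≥ k * T + T := by ring_nf; omega
      rcases hjb with ⟨a, rfl⟩ | rfl <;> rcases hjb' with ⟨b, rfl⟩ | rfl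
      · have hab : a ≠ b := by rintro rfl; exact hne rfl
        rcases Nat.lt_or_ge a.val b.val with h1 | h1
        · left
          rcases Nat.eq_zero_or_pos i.val with h0 | h0
          · simp only [ksumInstance2, Sum.elim_inl, if_pos h0, ← hT]
            exact hPmono a b h1
          · have h0' : ¬ i.val = 0 := by omega
            simp only [ksumInstance2, Sum.elim_inl, if_neg h0', ← hT]
            have hb1 : (a.val + 2) * T ≤ (b.val + 1) * T :=
              Nat.mul_le_mul_right _ (by omega)
            have : (a.val + 2) * T = (a.val + 1) * T + T := by ring
            omega
        · have h1' : b.val < a.val := by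
            rcases Nat.lt_or_ge b.val a.val with h2 | h2
            · exact h2
            · exact absurd (Fin.ext (by omega)) hab
          right
          rcases Nat.eq_zero_or_pos i.val with h0 | h0
          · simp only [ksumInstance2, Sum.elim_inl, if_pos h0, ← hT]
            exact hPmono b a h1'
          · have h0' : ¬ i.val = 0 := by omega
            simp only [ksumInstance2, Sum.elim_inl, if_neg h0', ← hT]
            have hb1 : (b.val + 2) * T ≤ (a.val + 1) * T :=
              Nat.mul_le_mul_right _ (by omega)
            have : (b.val + 2) * T = (b.val + 1) * T + T := by ring
            omega
      · left
        rcases Nat.eq_zero_or_pos i.val with h0 | h0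
        · simp only [ksumInstance2, Sum.elim_inl, Sum.elim_inr, if_pos h0, ← hT]
          exact hPB a
        · have h0' : ¬ i.val = 0 := by omega
          simp only [ksumInstance2, Sum.elim_inl, Sum.elim_inr, if_neg h0', ← hT]
          have : (a.val + 1) * T ≤ (k + 1) * T := Nat.mul_le_mul_right _ (by omega)
          have hTpos : 1 ≤ (a.val + 1) * T := Nat.one_le_iff_ne_zero.mpr
            (by positivity)
          omega
      · right
        rcases Nat.eq_zero_or_pos i.val with h0 | h0
        · simp only [ksumInstance2, Sum.elim_inl, Sum.elim_inr, if_pos h0, ← hT]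
          exact hPB b
        · have h0' : ¬ i.val = 0 := by omega
          simp only [ksumInstance2, Sum.elim_inl, Sum.elim_inr, if_neg h0', ← hT]
          have : (b.val + 1) * T ≤ (k + 1) * T := Nat.mul_le_mul_right _ (by omega)
          have hTpos : 1 ≤ (b.val + 1) * T := Nat.one_le_iff_ne_zero.mpr
            (by positivity)
          omega
      · exact absurd rfl hne
    · -- machine order
      intro jb hjb i i' hii'
      have hi0 : i.val = 0 := by omega
      have hi1 : i'.val = 1 := by omega
      have hi1' : ¬ i'.val = 0 := by omega
      simp only [Finset.mem_union, Finset.mem_image, Finset.mem_univ, true_and,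
        Finset.mem_singleton] at hjb
      rcases hjb with ⟨a, rfl⟩ | rfl
      · simp only [ksumInstance2, Sum.elim_inl, if_pos hi0, if_neg hi1', ← hT]
        have h1 := hPB a
        have h2 : T ≤ (a.val + 1) * T := Nat.le_mul_of_pos_left _ (by omega)
        omega
      · simp only [ksumInstance2, Sum.elim_inr, if_pos hi0, if_neg hi1', ← hT]
        have h1 : T ≤ (k + 1) * T := Nat.le_mul_of_pos_left _ (by omega)
        omega
    · -- due dates
      intro jb hjb i hi
      have hi1 : ¬ i.val = 0 := by omega
      simp only [Finset.mem_union, Finset.mem_image, Finset.mem_univ, true_and,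
        Finset.mem_singleton] at hjb
      rcases hjb with ⟨a, rfl⟩ | rfl
      · simp only [ksumInstance2, Sum.elim_inl, if_neg hi1, ← hT]
        have : T ≤ (a.val + 1) * T := Nat.le_mul_of_pos_left _ (by omega)
        omega
      · simp only [ksumInstance2, Sum.elim_inr, if_neg hi1, ← hT]
  · -- weight bound
    have hdisj : Disjoint
        (Finset.univ.image (fun i : Fin k => (Sum.inl (i, f i) : Fin k × Fin h ⊕ Unit)))
        ({Sum.inr ()} : Finset (Fin k × Fin h ⊕ Unit)) := by
      simp [Finset.disjoint_left]
    rw [Finset.sum_union hdisj, Finset.sum_image (by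
      intro a _ b _ hab
      have h2 : a = b ∧ f a = f b := by simpa using hab
      exact h2.1)]
    simp only [ksumInstance2, Sum.elim_inl, Sum.elim_inr, Finset.sum_singleton]
    rw [Finset.sum_add_distrib, Finset.sum_const, Finset.card_univ, Fintype.card_fin, hf]
    simp [smul_eq_mul]
    exact le_refl _
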